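/- Let K = F_q be a finite field and let X ⊆ P^{s-1} be parameterized by monomials y^{v_1},...,y^{v_s} in K[y_1,...,y_n] such that supp(y^{v_i}) ⊄ supp(y^{v_j}) for all i ≠ j. If f = t_j^{a_j} - t^c is a nonzero binomial with a_j a positive integer, then f is not in the vanishing ideal I(X). -/

import Mathlib

open MvPolynomial

/-- Evaluation of the monomials `y^{v_1},…,y^{v_s}` at a point `x ∈ K^n`. -/
noncomputable def monEval {K : Type} [Field K] {n s : ℕ} (v : Fin s → Fin n → ℕ)
    (x : Fin n → K) : Fin s → K := fun i => ∏ j, x j ^ v i j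

/-- The subset of `ℙ^{s-1}` parameterized by the monomials `y^{v_1},…,y^{v_s}`. -/
noncomputable def paramSet {K : Type} [Field K] {n s : ℕ} (v : Fin s → Fin n → ℕ) :
    Set (Projectivization K (Fin s → K)) :=
  { p | ∃ (x : Fin n → K) (h : monEval v x ≠ 0), p = Projectivization.mk K (monEval v x) h }

/-- The vanishing ideal of a set of projective points: the ideal generated by the
homogeneous polynomials vanishing at all points of the set. -/
noncomputable def vanishIdeal {K : Type} [Field K] {s : ℕ}
    (X : Set (Projectivization K (Fin s → K))) : Ideal (MvPolynomial (Fin s) K) :=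
  Ideal.span { f | (∃ d, f.IsHomogeneous d) ∧ ∀ p ∈ X, eval p.rep f = 0 }

/-- `supp(y^{v_i}) ⊄ supp(y^{v_j})` for all `i ≠ j`. -/
def clutterType {n s : ℕ} (v : Fin s → Fin n → ℕ) : Prop :=
  ∀ i j : Fin s, i ≠ j → ¬ ({k | v i k ≠ 0} ⊆ {k | v j k ≠ 0})

attribute [local instance] MvPolynomial.gradedAlgebra

lemma eval_smul_homog {K : Type} [CommRing K] {s : ℕ} {h : MvPolynomial (Fin s) K} {d : ℕ}
    (hh : h.IsHomogeneous d) (l : K) (y : Fin s → K) :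
    eval (fun i => l * y i) h = l ^ d * eval y h := by
  rw [eval_eq, eval_eq, Finset.mul_sum]
  apply Finset.sum_congr rfl
  intro e he
  rw [mem_support_iff] at he
  have hw : (Finsupp.weight 1) e = d := hh he
  have hdeg : ∑ i ∈ e.support, e i = d := by
    rw [← hw, Finsupp.weight_apply, Finsupp.sum]
    simp [smul_eq_mul]
  calc coeff e h * ∏ i ∈ e.support, (l * y i) ^ e i
      = coeff e h * ((∏ i ∈ e.support, l ^ e i) * ∏ i ∈ e.support, (y i) ^ e i) := by
        rw [← Finset.prod_mul_distrib]; simp [mul_pow]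
    _ = l ^ d * (coeff e h * ∏ i ∈ e.support, (y i) ^ e i) := by
        rw [Finset.prod_pow_eq_pow_sum, hdeg]; ring

lemma cone_vanish {K : Type} [Field K] {n s : ℕ} (v : Fin s → Fin n → ℕ)
    {g : MvPolynomial (Fin s) K} (hg : g ∈ vanishIdeal (paramSet v))
    (x : Fin n → K) (hx : monEval v x ≠ 0) : eval (monEval v x) g = 0 := by
  have hle : vanishIdeal (paramSet v) ≤ RingHom.ker (eval (monEval v x)) := by
    rw [vanishIdeal, Ideal.span_le]
    rintro h ⟨⟨d, hd⟩, hvan⟩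
    have hp : Projectivization.mk K (monEval v x) hx ∈ paramSet v := ⟨x, hx, rfl⟩
    have h0 := hvan _ hp
    obtain ⟨u, hu⟩ := Projectivization.exists_smul_eq_mk_rep K (monEval v x) hx
    rw [← hu] at h0
    rw [show (u • monEval v x : Fin s → K) = fun i => (u : K) * monEval v x i from rfl,
      eval_smul_homog hd] at h0
    rcases mul_eq_zero.mp h0 with h1 | h1
    · exact absurd h1 (pow_ne_zero _ u.ne_zero)
    · exact h1
  exact hle hg

lemma monEval_indicator {K : Type} [Field K] {n s : ℕ} (v : Fin s → Fin n → ℕ)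
    (hcl : clutterType v) (j : Fin s) :
    monEval v (fun k => if v j k ≠ 0 then (1 : K) else 0) =
      fun i => if i = j then 1 else 0 := by
  funext i
  by_cases hij : i = j
  · subst hij
    simp only [if_pos rfl, monEval]
    apply Finset.prod_eq_one
    intro k _
    by_cases hk : v i k ≠ 0
    · rw [if_pos hk, one_pow]
    · push_neg at hk
      rw [hk, pow_zero]
  · rw [if_neg hij]
    obtain ⟨k0, hk0, hk0'⟩ := Set.not_subset.mp (hcl i j hij)
    simp only [Set.mem_setOf_eq, not_not] at hk0 hk0'
    apply Finset.prod_eq_zero (Finset.mem_univ k0)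
    simp only []
    rw [if_neg (by simp [hk0']), zero_pow hk0]

/-- If the supports of the parameterizing monomials are pairwise incomparable, then a
nonzero binomial of the form `t_j^{a_j} - t^c` (with `a_j > 0`) does not belong
to the vanishing ideal `I(X)`. -/
theorem stmt1 {K : Type} [Field K] [Fintype K] {n s : ℕ} (v : Fin s → Fin n → ℕ)
    (hcl : clutterType v) (j : Fin s) (a : ℕ) (ha : 0 < a) (c : Fin s →₀ ℕ)
    (hf : (monomial (Finsupp.single j a) (1 : K) - monomial c 1 : MvPolynomial (Fin s) K) ≠ 0) :
    (monomial (Finsupp.single j a) (1 : K) - monomial c 1 : MvPolynomial (Fin s) K) ∉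
      vanishIdeal (paramSet v) := by
  intro hmem
  set x : Fin n → K := fun k => if v j k ≠ 0 then (1 : K) else 0 with hxdef
  have hev : monEval v x = fun i => if i = j then (1 : K) else 0 := monEval_indicator v hcl j
  have hx : monEval v x ≠ 0 := by
    rw [hev]
    intro h
    have := congrFun h j
    simp at this
  -- evaluation of the two monomials at the indicator point
  have hev1 : eval (monEval v x) (monomial (Finsupp.single j a) (1 : K)) = 1 := by
    rw [eval_monomial, one_mul, Finsupp.prod_single_index (by rw [pow_zero]), hev]
    simp
  have hdegs : (Finsupp.single j a).degree = a := by
    rw [Finsupp.degree_apply, Finsupp.support_single_ne_zero j ha.ne']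
    simp
  by_cases hc : ∃ i, i ≠ j ∧ c i ≠ 0
  · obtain ⟨i0, hi0, hci0⟩ := hc
    have hev2 : eval (monEval v x) (monomial c (1 : K)) = 0 := by
      rw [eval_monomial, one_mul, Finsupp.prod]
      apply Finset.prod_eq_zero (Finsupp.mem_support_iff.mpr hci0)
      rw [hev]
      simp only [if_neg hi0]
      exact zero_pow hci0
    have := cone_vanish v hmem x hx
    rw [map_sub, hev1, hev2, sub_zero] at this
    exact one_ne_zero this
  · push_neg at hc
    have hcs : c = Finsupp.single j (c j) := by
      ext i
      by_cases hij : i = j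
      · subst hij; simp
      · rw [hc i hij, Finsupp.single_apply, if_neg (Ne.symm hij)]
    have hcj : c j ≠ a := by
      intro h
      apply hf
      rw [hcs, h, sub_self]
    have hdegc : c.degree = c j := by
      rw [hcs]
      by_cases h0 : c j = 0
      · rw [h0]; simp [Finsupp.degree]
      · rw [Finsupp.degree_apply, Finsupp.support_single_ne_zero j h0]; simp
    -- homogeneity of the vanishing ideal
    have hhom : Ideal.IsHomogeneous (homogeneousSubmodule (Fin s) K)
        (vanishIdeal (paramSet v)) := by
      rw [vanishIdeal]
      exact Ideal.homogeneous_span _ _ (fun f hf => ⟨hf.1.choose, hf.1.choose_spec⟩)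
    have hg := hhom a hmem
    have hm1 : (monomial (Finsupp.single j a) (1 : K) : MvPolynomial (Fin s) K) ∈
        homogeneousSubmodule (Fin s) K a := isHomogeneous_monomial _ hdegs
    have hm2 : (monomial c (1 : K) : MvPolynomial (Fin s) K) ∈
        homogeneousSubmodule (Fin s) K (c j) := isHomogeneous_monomial _ hdegc
    rw [DirectSum.decompose_sub, DirectSum.sub_apply] at hg
    have hcoe : ((DirectSum.decompose (homogeneousSubmodule (Fin s) K)
          (monomial (Finsupp.single j a) (1 : K)) a -
          DirectSum.decompose (homogeneousSubmodule (Fin s) K) (monomial c (1 : K)) a :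
          homogeneousSubmodule (Fin s) K a) : MvPolynomial (Fin s) K) =
        monomial (Finsupp.single j a) (1 : K) := by
      rw [Submodule.coe_sub, DirectSum.decompose_of_mem_same _ hm1,
        DirectSum.decompose_of_mem_ne _ hm2 hcj, sub_zero]
    rw [hcoe] at hg
    have := cone_vanish v hg x hx
    rw [hev1] at this
    exact one_ne_zero this
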